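/- Define C(x, y) = (y−2)³ + x²·(64 − 16x² + x⁴ + (y−2)(32 − 5x²) + (y−2)²(7 − 5y²)). Then C(0, 2) = 0, and for every real a: lim_{w→0} C(−a·w³, 2·cos(w/2)) / w⁶ = 64a² − 1/64. Consequently, for a > 0 this limit vanishes if and only if a = 1/64. -/

import Mathlib

open Filter Topology

/-- The defining polynomial of the projected character variety of the example. -/
noncomputable def Ccurve (x y : ℝ) : ℝ :=
  (y - 2) ^ 3 +
    x ^ 2 * (64 - 16 * x ^ 2 + x ^ 4 + (y - 2) * (32 - 5 * x ^ 2) +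
      (y - 2) ^ 2 * (7 - 5 * y ^ 2))

lemma sin_div_self_tendsto : Tendsto (fun w : ℝ => Real.sin w / w) (𝓝[≠] 0) (𝓝 1) := by
  have h := Real.hasDerivAt_sin 0
  rw [Real.cos_zero, hasDerivAt_iff_tendsto_slope] at h
  refine h.congr' ?_
  filter_upwards [self_mem_nhdsWithin] with w hw
  simp [slope_def_field, div_eq_div_iff]

lemma sin_quarter_tendsto : Tendsto (fun w : ℝ => Real.sin (w / 4) / w) (𝓝[≠] 0) (𝓝 (1/4)) := by
  have hmap : Tendsto (fun w : ℝ => w / 4) (𝓝[≠] (0:ℝ)) (𝓝[≠] (0:ℝ)) := by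
    apply tendsto_nhdsWithin_of_tendsto_nhds_of_eventually_within
    · have : Tendsto (fun w : ℝ => w / 4) (𝓝 (0:ℝ)) (𝓝 ((0:ℝ)/4)) :=
        tendsto_id.div_const 4
      simpa using this.mono_left nhdsWithin_le_nhds
    · filter_upwards [self_mem_nhdsWithin] with w hw
      simp [Set.mem_setOf_eq, div_eq_zero_iff]
      exact hw
  have h := (sin_div_self_tendsto.comp hmap).mul_const (1/4 : ℝ)
  rw [one_mul] at h
  refine h.congr' ?_
  filter_upwards [self_mem_nhdsWithin] with w hw
  have hw' : w ≠ 0 := hw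
  simp only [Function.comp_apply]
  field_simp

theorem character_variety_example (a : ℝ) :
    Ccurve 0 2 = 0 ∧
    Tendsto (fun w : ℝ => Ccurve (-a * w ^ 3) (2 * Real.cos (w / 2)) / w ^ 6)
      (𝓝[≠] 0) (𝓝 (64 * a ^ 2 - 1 / 64)) ∧
    (0 < a → (64 * a ^ 2 - 1 / 64 = 0 ↔ a = 1 / 64)) := by
  refine ⟨by norm_num [Ccurve], ?_, ?_⟩
  · -- main limit
    have hG : Tendsto (fun w : ℝ =>
        a ^ 2 * (64 - 16 * (-a * w ^ 3) ^ 2 + (-a * w ^ 3) ^ 4 +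
          (2 * Real.cos (w / 2) - 2) * (32 - 5 * (-a * w ^ 3) ^ 2) +
          (2 * Real.cos (w / 2) - 2) ^ 2 * (7 - 5 * (2 * Real.cos (w / 2)) ^ 2)))
        (𝓝[≠] 0) (𝓝 (a ^ 2 * 64)) := by
      have hc : Continuous (fun w : ℝ =>
          a ^ 2 * (64 - 16 * (-a * w ^ 3) ^ 2 + (-a * w ^ 3) ^ 4 +
            (2 * Real.cos (w / 2) - 2) * (32 - 5 * (-a * w ^ 3) ^ 2) +
            (2 * Real.cos (w / 2) - 2) ^ 2 * (7 - 5 * (2 * Real.cos (w / 2)) ^ 2))) := by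
        fun_prop
      have h := (hc.tendsto 0).mono_left (nhdsWithin_le_nhds (s := {(0:ℝ)}ᶜ))
      simpa using h
    have hS : Tendsto (fun w : ℝ => (-64 : ℝ) * (Real.sin (w / 4) / w) ^ 6)
        (𝓝[≠] 0) (𝓝 ((-64 : ℝ) * (1/4) ^ 6)) :=
      (sin_quarter_tendsto.pow 6).const_mul _
    have hsum := hS.add hG
    have hlim : ((-64 : ℝ) * (1/4) ^ 6 + a ^ 2 * 64) = 64 * a ^ 2 - 1 / 64 := by norm_num; ring
    rw [hlim] at hsum
    refine hsum.congr' ?_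
    filter_upwards [self_mem_nhdsWithin] with w hw
    have hw' : (w : ℝ) ≠ 0 := hw
    have hcos : 2 * Real.cos (w / 2) - 2 = -4 * Real.sin (w / 4) ^ 2 := by
      have h2 : Real.sin (w / 4) ^ 2 = 1 / 2 - Real.cos (2 * (w / 4)) / 2 := by
        rw [Real.sin_sq_eq_half_sub]
      have : (2 : ℝ) * (w / 4) = w / 2 := by ring
      rw [this] at h2
      linarith
    simp only [Ccurve]
    rw [hcos]
    field_simp
    ring
  · intro ha
    constructor
    · intro h
      have : (a - 1/64) * (a + 1/64) = 0 := by nlinarith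
      rcases mul_eq_zero.1 this with h1 | h1
      · linarith
      · linarith
    · rintro rfl; norm_num
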